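/- Let M be a compact metric space with Lebesgue covering dimension dim M ≥ n, and let C denote the Cantor set. Suppose f : A → M is a continuous surjection from a closed subset A of C onto M. Then there exist n+1 points x₀, …, x_n ∈ A with equal images under f at the positions prescribed by Hurewicz's theorem; in particular there exist n+1 distinct points of A mapped by f to a single point of M. -/
import Mathlib


open Metric Set

/-- The pair `(U₁, U₂)` contains a snake of length `s` with respect to the
strict total order `T`: a `T`-increasing sequence `a₀ <_T a₁ <_T ⋯ <_T a_s`
with even-indexed points in `U₁` and odd-indexed points in `U₂`. -/
def HasSnake {M : Type*} (T : M → M → Prop) (U₁ U₂ : Set M) (s : ℕ) : Prop :=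
  ∃ a : Fin (s + 1) → M,
    (∀ i j : Fin (s + 1), i < j → T (a i) (a j)) ∧
    (∀ i : Fin (s + 1), Even (i : ℕ) → a i ∈ U₁) ∧
    (∀ i : Fin (s + 1), Odd (i : ℕ) → a i ∈ U₂)

/-- The snake number `Snake_T(x, y)`: the greatest `s` such that for every `ε > 0`
the pair `(B_ε(x), B_ε(y))` contains a snake of length `s`; `∞` if no greatest exists. -/
noncomputable def snakeNum {M : Type*} [MetricSpace M] (T : M → M → Prop) (x y : M) : ℕ∞ :=
  ⨆ s ∈ {s : ℕ | ∀ ε : ℝ, 0 < ε → HasSnake T (ball x ε) (ball y ε) s}, (s : ℕ∞)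

/-- The snake number `Snake(M, T)` of the ordered metric space: the supremum of
`Snake_T(x, y)` over all pairs of distinct points. -/
noncomputable def snakeNumSpace {M : Type*} [MetricSpace M] (T : M → M → Prop) : ℕ∞ :=
  ⨆ (x : M) (y : M) (_ : x ≠ y), snakeNum T x y

/-- The Lebesgue covering dimension of `M` is at most `n`: every finite open cover
has a finite open refinement in which no point belongs to more than `n + 1` sets. -/
def CovDimLE (M : Type*) [TopologicalSpace M] (n : ℤ) : Prop :=
  ∀ 𝒰 : Set (Set M), 𝒰.Finite → (∀ U ∈ 𝒰, IsOpen U) → ⋃₀ 𝒰 = Set.univ →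
    ∃ 𝒱 : Set (Set M), 𝒱.Finite ∧ (∀ V ∈ 𝒱, IsOpen V) ∧ ⋃₀ 𝒱 = Set.univ ∧
      (∀ V ∈ 𝒱, ∃ U ∈ 𝒰, V ⊆ U) ∧
      ∀ x : M, ({V ∈ 𝒱 | x ∈ V}.ncard : ℤ) ≤ n + 1

lemma preCantorSet_subset_Icc' (n : ℕ) : preCantorSet n ⊆ Set.Icc 0 1 := by
  induction n with
  | zero => simp
  | succ n ih =>
    rintro x (⟨u, hu, rfl⟩ | ⟨u, hu, rfl⟩) <;>
      obtain ⟨h0, h1⟩ := ih hu <;>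
      exact ⟨by dsimp; linarith, by dsimp; linarith⟩

lemma length_le_of_subset_preCantorSet :
    ∀ (n : ℕ) (x y : ℝ), x ≤ y → Set.Icc x y ⊆ preCantorSet n → y - x ≤ (1/3 : ℝ) ^ n := by
  intro n
  induction n with
  | zero =>
    intro x y hxy h
    obtain ⟨h0x, hx1⟩ := h (Set.left_mem_Icc.2 hxy)
    obtain ⟨h0y, hy1⟩ := h (Set.right_mem_Icc.2 hxy)
    simpa using by linarith
  | succ n ih =>
    intro x y hxy h
    have hmid : (1/2 : ℝ) ∉ preCantorSet (n+1) := by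
      rintro (⟨u, hu, he⟩ | ⟨u, hu, he⟩) <;>
        obtain ⟨h0, h1⟩ := preCantorSet_subset_Icc' n hu <;>
        · simp only at he; linarith
    have hx := h (Set.left_mem_Icc.2 hxy)
    rcases hx with ⟨u, hu, he⟩ | ⟨u, hu, he⟩
    · obtain ⟨h0, h1⟩ := preCantorSet_subset_Icc' n hu
      have hx3 : x ≤ 1/3 := by simp only at he; linarith
      have hall : ∀ z ∈ Set.Icc x y, ∃ v ∈ preCantorSet n, v / 3 = z := by
        intro z hz
        rcases h hz with ⟨v, hv, hve⟩ | ⟨v, hv, hve⟩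
        · exact ⟨v, hv, hve⟩
        · exfalso
          obtain ⟨h0v, h1v⟩ := preCantorSet_subset_Icc' n hv
          have hz2 : (2:ℝ)/3 ≤ z := by simp only at hve; linarith
          exact hmid (h ⟨by linarith, by linarith [hz.2]⟩)
      have hsub : Set.Icc (3*x) (3*y) ⊆ preCantorSet n := by
        intro w hw
        obtain ⟨v, hv, hve⟩ := hall (w/3) ⟨by linarith [hw.1], by linarith [hw.2]⟩
        have : v = w := by linarith
        rwa [← this]
      have := ih (3*x) (3*y) (by linarith) hsub
      rw [pow_succ]
      linarith
    · obtain ⟨h0, h1⟩ := preCantorSet_subset_Icc' n hu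
      have hx3 : (2:ℝ)/3 ≤ x := by simp only at he; linarith
      have hall : ∀ z ∈ Set.Icc x y, ∃ v ∈ preCantorSet n, (2 + v) / 3 = z := by
        intro z hz
        rcases h hz with ⟨v, hv, hve⟩ | ⟨v, hv, hve⟩
        · exfalso
          obtain ⟨h0v, h1v⟩ := preCantorSet_subset_Icc' n hv
          have hz2 : z ≤ 1/3 := by simp only at hve; linarith
          linarith [hz.1]
        · exact ⟨v, hv, hve⟩
      have hsub : Set.Icc (3*x - 2) (3*y - 2) ⊆ preCantorSet n := by
        intro w hw
        obtain ⟨v, hv, hve⟩ := hall ((2 + w)/3) ⟨by linarith [hw.1], by linarith [hw.2]⟩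
        have : v = w := by linarith
        rwa [← this]
      have := ih (3*x - 2) (3*y - 2) (by linarith) hsub
      rw [pow_succ]
      linarith

lemma isTotallyDisconnected_subset_cantorSet {A : Set ℝ} (hAC : A ⊆ cantorSet) :
    IsTotallyDisconnected A := by
  intro s hsA hs x hx y hy
  have key : ∀ a ∈ s, ∀ b ∈ s, a ≤ b → b ≤ a := by
    intro a ha b hb hab
    have hIcc : Set.Icc a b ⊆ s := hs.ordConnected.out ha hb
    have hle : ∀ m : ℕ, b - a ≤ (1/3 : ℝ) ^ m := fun m =>
      length_le_of_subset_preCantorSet m a b hab fun z hz =>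
        Set.mem_iInter.1 (hAC (hsA (hIcc hz))) m
    have h0 : b - a ≤ 0 :=
      ge_of_tendsto' (tendsto_pow_atTop_nhds_zero_of_lt_one (by norm_num) (by norm_num))
        hle
    linarith
  rcases le_total x y with h | h
  · exact le_antisymm h (key x hx y hy h)
  · exact (le_antisymm h (key y hy x hx h)).symm

lemma exists_thickening_iInter_empty {M : Type*} [MetricSpace M] [CompactSpace M] [Nonempty M]
    {ι : Type*} (S : Finset ι) (F : ι → Set M) (hF : ∀ i, IsClosed (F i))
    (h : (⋂ i ∈ S, F i) = ∅) :
    ∃ ε : ℝ, 0 < ε ∧ (⋂ i ∈ S, Metric.thickening ε (F i)) = ∅ := by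
  by_cases hempty : ∃ i ∈ S, F i = ∅
  · obtain ⟨i, hi, hFi⟩ := hempty
    refine ⟨1, one_pos, Set.eq_empty_of_subset_empty ?_⟩
    refine subset_trans (Set.biInter_subset_of_mem hi) ?_
    rw [hFi, Metric.thickening_empty]
  push_neg at hempty
  have hSne : S.Nonempty := by
    by_contra hS
    rw [Finset.not_nonempty_iff_eq_empty] at hS
    rw [hS] at h
    simp at h
  set g : M → ℝ := fun y => ∑ i ∈ S, Metric.infDist y (F i) with hg
  have hcont : Continuous g := continuous_finset_sum _ fun i _ => continuous_infDist_pt (F i)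
  have hpos : ∀ y, 0 < g y := by
    intro y
    have hy : y ∉ ⋂ i ∈ S, F i := by rw [h]; exact Set.notMem_empty y
    simp only [Set.mem_iInter, not_forall] at hy
    obtain ⟨i, hi, hyi⟩ := hy
    have h1 : 0 < Metric.infDist y (F i) :=
      ((hF i).notMem_iff_infDist_pos (hempty i hi)).1 hyi
    exact lt_of_lt_of_le h1 <|
      Finset.single_le_sum (fun j _ => Metric.infDist_nonneg) hi
  obtain ⟨y₀, -, hy₀⟩ := isCompact_univ.exists_isMinOn Set.univ_nonempty hcont.continuousOn
  have hcard : (0 : ℝ) < S.card := by exact_mod_cast Finset.card_pos.2 hSne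
  refine ⟨g y₀ / S.card, div_pos (hpos y₀) hcard, Set.eq_empty_of_subset_empty ?_⟩
  intro y hy
  exfalso
  simp only [Set.mem_iInter] at hy
  have hlt : ∀ i ∈ S, Metric.infDist y (F i) < g y₀ / S.card := by
    intro i hi
    obtain ⟨z, hz, hdz⟩ := Metric.mem_thickening_iff.1 (hy i hi)
    exact lt_of_le_of_lt (Metric.infDist_le_dist_of_mem hz) hdz
  have hsum : g y < S.card * (g y₀ / S.card) := by
    calc g y = ∑ i ∈ S, Metric.infDist y (F i) := rfl
      _ < ∑ _i ∈ S, g y₀ / S.card := Finset.sum_lt_sum_of_nonempty hSne hlt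
      _ = S.card * (g y₀ / S.card) := by rw [Finset.sum_const, nsmul_eq_mul]
  rw [mul_div_cancel₀ _ hcard.ne'] at hsum
  exact absurd (hy₀ (Set.mem_univ y)) (not_le.2 hsum)

/-- **Hurewicz-type theorem.** If `M` is a compact metric space with covering dimension
`≥ n` and `f : A → M` is a continuous surjection from a closed subset `A` of the Cantor
set, then there exist `n + 1` distinct points of `A` mapped by `f` to a single point. -/
theorem exists_fiber_with_card_ge_of_covDim_ge
    {M : Type*} [MetricSpace M] [CompactSpace M]
    (n : ℕ) (hdim : ¬ CovDimLE M ((n : ℤ) - 1))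
    (A : Set ℝ) (hA : IsClosed A) (hAC : A ⊆ cantorSet)
    (f : A → M) (hf : Continuous f) (hsurj : Function.Surjective f) :
    ∃ x : Fin (n + 1) → A, Function.Injective x ∧
      ∀ i j : Fin (n + 1), f (x i) = f (x j) := by
  classical
  by_contra hcon
  apply hdim
  rcases isEmpty_or_nonempty M with hM | hM
  · intro 𝒰 _ _ _
    refine ⟨∅, finite_empty, by simp, ?_, by simp, ?_⟩
    · rw [Set.sUnion_empty, Set.univ_eq_empty_iff.2 hM]
    · intro x
      exact absurd (Nonempty.intro x) (not_nonempty_iff.2 hM)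
  -- every fiber is finite with at most n points
  have hfib : ∀ y : M, {a : A | f a = y}.Finite ∧ {a : A | f a = y}.ncard ≤ n := by
    intro y
    have hno : ¬ ∃ t : Set A, t ⊆ {a : A | f a = y} ∧ t.ncard = n + 1 := by
      rintro ⟨t, hts, htc⟩
      have htfin : t.Finite := Set.finite_of_ncard_ne_zero (by omega)
      have hcard : htfin.toFinset.card = n + 1 := by
        rw [← Set.ncard_eq_toFinset_card t htfin]; exact htc
      let e := htfin.toFinset.equivFin
      refine hcon ⟨fun i => (e.symm (Fin.cast hcard.symm i) : A), ?_, ?_⟩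
      · intro i j hij
        have := e.symm.injective (Subtype.val_injective hij)
        simpa [Fin.ext_iff] using congrArg Fin.val this
      · intro i j
        have hi : ((e.symm (Fin.cast hcard.symm i)) : A) ∈ t :=
          htfin.mem_toFinset.1 (e.symm (Fin.cast hcard.symm i)).2
        have hj : ((e.symm (Fin.cast hcard.symm j)) : A) ∈ t :=
          htfin.mem_toFinset.1 (e.symm (Fin.cast hcard.symm j)).2
        rw [hts hi, hts hj]
    constructor
    · by_contra hinf
      obtain ⟨t, hts, -, htc⟩ :=
        (Set.Infinite.exists_subset_ncard_eq hinf (n+1))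
      exact hno ⟨t, hts, htc⟩
    · by_contra hlt
      obtain ⟨t, hts, htc⟩ := Set.exists_subset_card_eq (s := {a : A | f a = y}) (n := n+1) (by omega)
      exact hno ⟨t, hts, htc⟩
  have hAcomp : IsCompact A := isCompact_cantorSet.of_isClosed_subset hA hAC
  haveI : CompactSpace A := isCompact_iff_compactSpace.1 hAcomp
  haveI : TotallyDisconnectedSpace A :=
    totallyDisconnectedSpace_subtype_iff.2 (isTotallyDisconnected_subset_cantorSet hAC)
  haveI hAne : Nonempty A := by
    obtain ⟨a, -⟩ := hsurj (Classical.arbitrary M)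
    exact ⟨a⟩
  intro 𝒰 h𝒰fin h𝒰open h𝒰cover
  -- clopen sets around each point, refining the pullback of 𝒰
  have hstep : ∀ a : A, ∃ K : Set A, (IsClopen K ∧ a ∈ K) ∧ ∃ U, U ∈ 𝒰 ∧ K ⊆ f ⁻¹' U := by
    intro a
    have : f a ∈ ⋃₀ 𝒰 := by rw [h𝒰cover]; trivial
    obtain ⟨U, hU, hfa⟩ := this
    obtain ⟨K, hK, haK, hKU⟩ :=
      compact_exists_isClopen_in_isOpen ((h𝒰open U hU).preimage hf) hfa
    exact ⟨K, ⟨hK, haK⟩, U, hU, hKU⟩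
  choose K hK U hU𝒰 hKU using hstep
  obtain ⟨t, ht⟩ := isCompact_univ.elim_finite_subcover K (fun a => (hK a).1.2)
    (fun x _ => Set.mem_iUnion.2 ⟨x, (hK x).2⟩)
  -- disjointify
  set D : A → Set A := fun a => K a \ ⋃ b ∈ t.filter (· < a), K b with hD
  have hDclopen : ∀ a, IsClopen (D a) :=
    fun a => ((hK a).1).diff (isClopen_biUnion_finset fun b _ => (hK b).1)
  have hDsub : ∀ a, D a ⊆ K a := fun a => Set.diff_subset
  have hDdisj : ∀ a ∈ t, ∀ b ∈ t, a ≠ b → ∀ x, x ∈ D a → x ∈ D b → False := by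
    intro a ha b hb hab x hxa hxb
    rcases lt_or_gt_of_ne hab with hlt | hlt
    · exact hxb.2 (Set.mem_iUnion₂.2 ⟨a, by simp [Finset.mem_filter, ha, hlt], hxa.1⟩)
    · exact hxa.2 (Set.mem_iUnion₂.2 ⟨b, by simp [Finset.mem_filter, hb, hlt], hxb.1⟩)
  have hDcover : ∀ x : A, ∃ a ∈ t, x ∈ D a := by
    intro x
    have hx : x ∈ ⋃ a ∈ t, K a := ht trivial
    set s := t.filter (fun a => x ∈ K a) with hs
    have hsne : s.Nonempty := by
      simp only [Set.mem_iUnion] at hx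
      obtain ⟨a, ha, hxa⟩ := hx
      exact ⟨a, by simp [hs, Finset.mem_filter, ha, hxa]⟩
    set a := s.min' hsne with ha
    have hat : a ∈ t := (Finset.mem_filter.1 (s.min'_mem hsne)).1
    have hax : x ∈ K a := (Finset.mem_filter.1 (s.min'_mem hsne)).2
    refine ⟨a, hat, hax, ?_⟩
    intro hmem
    simp only [Set.mem_iUnion] at hmem
    obtain ⟨b, hb, hxb⟩ := hmem
    rw [Finset.mem_filter] at hb
    have : a ≤ b := s.min'_le b (by simp [hs, Finset.mem_filter, hb.1, hxb])
    exact absurd hb.2 (not_lt.2 this)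
  -- images of the pieces
  set F : A → Set M := fun a => f '' D a with hF
  have hFcompact : ∀ a, IsCompact (F a) :=
    fun a => ((hDclopen a).1.isCompact).image hf
  have hFclosed : ∀ a, IsClosed (F a) := fun a => (hFcompact a).isClosed
  have hFsubU : ∀ a, F a ⊆ U a := by
    rintro a - ⟨x, hx, rfl⟩
    exact hKU a (hDsub a hx)
  have hFcover : ∀ y : M, ∃ a ∈ t, y ∈ F a := by
    intro y
    obtain ⟨x, rfl⟩ := hsurj y
    obtain ⟨a, hat, hxa⟩ := hDcover x
    exact ⟨a, hat, x, hxa, rfl⟩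
  -- order of the closed cover
  have horder : ∀ y : M, (t.filter (fun a => y ∈ F a)).card ≤ n := by
    intro y
    set s := t.filter (fun a => y ∈ F a) with hs
    have hchoice : ∀ a : A, ∃ wa : A, a ∈ s → wa ∈ D a ∧ f wa = y := by
      intro a
      by_cases ha : a ∈ s
      · obtain ⟨wa, hw, hwy⟩ := (Finset.mem_filter.1 ha).2
        exact ⟨wa, fun _ => ⟨hw, hwy⟩⟩
      · exact ⟨Classical.arbitrary A, fun h => absurd h ha⟩
    choose w hw using hchoice
    have hmaps : ∀ a ∈ s, w a ∈ (hfib y).1.toFinset := by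
      intro a ha
      rw [Set.Finite.mem_toFinset]
      exact (hw a ha).2
    have hinj : Set.InjOn w ↑s := by
      intro a ha b hb hab
      by_contra hne
      have hat := (Finset.mem_filter.1 ha).1
      have hbt := (Finset.mem_filter.1 hb).1
      exact hDdisj a hat b hbt hne (w a) (hw a ha).1 (hab ▸ (hw b hb).1)
    calc s.card ≤ (hfib y).1.toFinset.card := Finset.card_le_card_of_injOn w hmaps hinj
      _ = {a : A | f a = y}.ncard := (Set.ncard_eq_toFinset_card _ (hfib y).1).symm
      _ ≤ n := (hfib y).2
  -- choose thickening radii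
  have h1 : ∀ a : A, ∃ δ : ℝ, 0 < δ ∧ Metric.thickening δ (F a) ⊆ U a := by
    intro a
    obtain ⟨δ, hδ, hsub⟩ := (hFcompact a).exists_thickening_subset_open
      (h𝒰open (U a) (hU𝒰 a)) (hFsubU a)
    exact ⟨δ, hδ, hsub⟩
  choose δ₁ hδ₁pos hδ₁ using h1
  have h2 : ∀ S : Finset A, ∃ δ : ℝ, 0 < δ ∧
      ((⋂ a ∈ S, F a) = ∅ → (⋂ a ∈ S, Metric.thickening δ (F a)) = ∅) := by
    intro S
    by_cases hS : (⋂ a ∈ S, F a) = ∅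
    · obtain ⟨δ, hδ, hemp⟩ := exists_thickening_iInter_empty S F hFclosed hS
      exact ⟨δ, hδ, fun _ => hemp⟩
    · exact ⟨1, one_pos, fun h => absurd h hS⟩
  choose δ₂ hδ₂pos hδ₂ using h2
  have htne : t.Nonempty := by
    obtain ⟨a, hat, -⟩ := hDcover (Classical.arbitrary A)
    exact ⟨a, hat⟩
  set ε : ℝ := min (t.inf' htne δ₁) (t.powerset.inf' t.powerset_nonempty δ₂) with hε
  have hεpos : 0 < ε := by
    apply lt_min
    · exact (Finset.lt_inf'_iff _).2 fun b _ => hδ₁pos b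
    · exact (Finset.lt_inf'_iff _).2 fun S _ => hδ₂pos S
  have hεδ₁ : ∀ a ∈ t, ε ≤ δ₁ a :=
    fun a ha => (min_le_left _ _).trans (Finset.inf'_le _ ha)
  have hεδ₂ : ∀ S ∈ t.powerset, ε ≤ δ₂ S :=
    fun S hS => (min_le_right _ _).trans (Finset.inf'_le _ hS)
  set V : A → Set M := fun a => Metric.thickening ε (F a) with hV
  refine ⟨V '' ↑t, t.finite_toSet.image V, ?_, ?_, ?_, ?_⟩
  · rintro W ⟨a, -, rfl⟩
    exact Metric.isOpen_thickening
  · apply Set.eq_univ_of_forall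
    intro y
    obtain ⟨a, hat, hya⟩ := hFcover y
    exact ⟨V a, ⟨a, hat, rfl⟩, Metric.self_subset_thickening hεpos (F a) hya⟩
  · rintro W ⟨a, hat, rfl⟩
    exact ⟨U a, hU𝒰 a, (Metric.thickening_mono (hεδ₁ a hat) (F a)).trans (hδ₁ a)⟩
  · intro x
    set Sx := t.filter (fun a => x ∈ V a) with hSx
    have hSxcard : Sx.card ≤ n := by
      have hne : (⋂ a ∈ Sx, F a) ≠ ∅ := by
        intro hemp
        have hε2 : ε ≤ δ₂ Sx := hεδ₂ Sx (Finset.mem_powerset.2 (Finset.filter_subset _ _))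
        have hx : x ∈ ⋂ a ∈ Sx, Metric.thickening (δ₂ Sx) (F a) :=
          Set.mem_iInter₂.2 fun a ha =>
            Metric.thickening_mono hε2 (F a) (Finset.mem_filter.1 ha).2
        rw [hδ₂ Sx hemp] at hx
        simp at hx
      obtain ⟨z, hz⟩ := Set.nonempty_iff_ne_empty.2 hne
      have hsub : Sx ⊆ t.filter (fun a => z ∈ F a) := by
        intro a ha
        exact Finset.mem_filter.2 ⟨(Finset.mem_filter.1 ha).1,
          Set.mem_iInter₂.1 hz a ha⟩
      exact (Finset.card_le_card hsub).trans (horder z)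
    have hsub2 : {W ∈ V '' ↑t | x ∈ W} ⊆ V '' ↑Sx := by
      rintro W ⟨⟨a, hat, rfl⟩, hxW⟩
      exact ⟨a, by simp [hSx, Finset.mem_filter, Finset.mem_coe.1 hat, hxW], rfl⟩
    have hle : {W ∈ V '' ↑t | x ∈ W}.ncard ≤ n := by
      calc {W ∈ V '' ↑t | x ∈ W}.ncard ≤ (V '' ↑Sx).ncard :=
            Set.ncard_le_ncard hsub2 (Sx.finite_toSet.image V)
        _ ≤ (↑Sx : Set A).ncard := Set.ncard_image_le Sx.finite_toSet
        _ = Sx.card := Set.ncard_coe_finset Sx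
        _ ≤ n := hSxcard
    have hring : ((n : ℤ) - 1) + 1 = (n : ℤ) := by ring
    rw [hring]
    exact_mod_cast hle
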